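/- Let π be a group, m, l ∈ π two commuting elements, and ρ : π → GL_m(C) a representation with ρ(m) = diag(μ_0,1,...,1) and ρ(l) = diag(λ_0,*,...,*) diagonal matrices, where μ_0 ≠ 1. Define ε on the tensor algebra over R_0 = Z[λ^{±1},μ^{±1}] freely generated by symbols [γ] for γ ∈ π by ε(μ) = μ_0, ε(λ) = λ_0, and ε([γ]) = (1-μ_0)·(ρ(γ))_{11}. Then ε descends to a ring homomorphism on the quotient by the relations: [e] = 1-μ; [γl] = [lγ] = λ[γ] and [γm] = [mγ] = μ[γ] for all γ ∈ π; and [γ_1γ_2] - [γ_1 m γ_2] - [γ_1][γ_2] = 0 for all γ_1, γ_2 ∈ π. -/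

import Mathlib

/-- `R₀ = ℤ[λ^{±1}, μ^{±1}]` as the group algebra `ℤ[ℤ²]`. -/
abbrev R0 : Type := AddMonoidAlgebra ℤ (ℤ × ℤ)

noncomputable def lam : R0 := AddMonoidAlgebra.single (1, 0) 1
noncomputable def mu : R0 := AddMonoidAlgebra.single (0, 1) 1

/-- The defining relations of the cord algebra (Theorem 4.6): on the tensor algebra
over `R₀` freely generated by symbols `[γ]`, `γ ∈ π`, impose `[e] = 1 - μ`;
`[γl] = [lγ] = λ[γ]`, `[γm] = [mγ] = μ[γ]`; and
`[γ₁γ₂] - [γ₁mγ₂] - [γ₁][γ₂] = 0`. -/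
inductive cordRel (π : Type) [Group π] (m l : π) :
    FreeAlgebra R0 π → FreeAlgebra R0 π → Prop
  | ident : cordRel π m l (FreeAlgebra.ι R0 (1 : π)) (1 - algebraMap R0 _ mu)
  | mul_l (γ : π) : cordRel π m l (FreeAlgebra.ι R0 (γ * l))
      (algebraMap R0 _ lam * FreeAlgebra.ι R0 γ)
  | l_mul (γ : π) : cordRel π m l (FreeAlgebra.ι R0 (l * γ))
      (algebraMap R0 _ lam * FreeAlgebra.ι R0 γ)
  | mul_m (γ : π) : cordRel π m l (FreeAlgebra.ι R0 (γ * m))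
      (algebraMap R0 _ mu * FreeAlgebra.ι R0 γ)
  | m_mul (γ : π) : cordRel π m l (FreeAlgebra.ι R0 (m * γ))
      (algebraMap R0 _ mu * FreeAlgebra.ι R0 γ)
  | skein (γ₁ γ₂ : π) : cordRel π m l (FreeAlgebra.ι R0 (γ₁ * γ₂))
      (FreeAlgebra.ι R0 (γ₁ * m * γ₂) + FreeAlgebra.ι R0 γ₁ * FreeAlgebra.ι R0 γ₂)

/-- The cord algebra of `(π, m, l)`. -/
abbrev CordAlgebra (π : Type) [Group π] (m l : π) : Type :=
  RingQuot (cordRel π m l)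

/-- Let `π` be a group, `m, l ∈ π` commuting elements, and `ρ : π → GL_N(ℂ)` a
representation with `ρ(m) = diag(μ₀,1,…,1)` and `ρ(l)` diagonal with `(1,1)` entry
`λ₀`, where `μ₀ ≠ 1`.  Then the assignment `ε(μ) = μ₀`, `ε(λ) = λ₀`,
`ε([γ]) = (1-μ₀)·(ρ(γ))₁₁` descends to a ring homomorphism on the cord algebra. -/
theorem representation_gives_augmentation
    (π : Type) [Group π] (m l : π) (hml : m * l = l * m)
    (N : ℕ) (hN : 2 ≤ N)
    (ρ : π →* Matrix.GeneralLinearGroup (Fin N) ℂ)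
    (μ₀ l₀ : ℂ) (hμ₀ : μ₀ ≠ 1)
    (hρm : ((ρ m : Matrix (Fin N) (Fin N) ℂ)) =
      Matrix.diagonal (fun i => if i = (⟨0, by omega⟩ : Fin N) then μ₀ else 1))
    (hρl : ∃ dl : Fin N → ℂ, dl ⟨0, by omega⟩ = l₀ ∧
      ((ρ l : Matrix (Fin N) (Fin N) ℂ)) = Matrix.diagonal dl) :
    ∃ E : CordAlgebra π m l →+* ℂ,
      (∀ γ : π, E (RingQuot.mkRingHom (cordRel π m l) (FreeAlgebra.ι R0 γ)) =
        (1 - μ₀) * ((ρ γ : Matrix (Fin N) (Fin N) ℂ)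
          (⟨0, by omega⟩ : Fin N) (⟨0, by omega⟩ : Fin N))) ∧
      E (RingQuot.mkRingHom (cordRel π m l) (algebraMap R0 _ lam)) = l₀ ∧
      E (RingQuot.mkRingHom (cordRel π m l) (algebraMap R0 _ mu)) = μ₀ := by
  have h0N : (0 : ℕ) < N := by omega
  set i0 : Fin N := ⟨0, h0N⟩ with hi0
  obtain ⟨dl, hdl0, hdl⟩ := hρl
  set d : Fin N → ℂ := fun i => if i = i0 then μ₀ else 1 with hd
  -- entries of ρ as matrices
  have coe_mul : ∀ a b : π, ((ρ (a * b) : Matrix (Fin N) (Fin N) ℂ)) =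
      (ρ a : Matrix (Fin N) (Fin N) ℂ) * (ρ b : Matrix (Fin N) (Fin N) ℂ) := by
    intro a b; rw [map_mul]; rfl
  -- μ₀ and l₀ are nonzero
  have hinv : ∀ a : π, ((ρ a : Matrix (Fin N) (Fin N) ℂ)) *
      ((ρ a⁻¹ : Matrix (Fin N) (Fin N) ℂ)) = 1 := by
    intro a
    rw [← coe_mul, mul_inv_cancel, map_one]; rfl
  have hmu0 : μ₀ ≠ 0 := by
    intro h
    have h1 := congrArg (fun M : Matrix (Fin N) (Fin N) ℂ => M i0 i0) (hinv m)
    simp only [hρm, Matrix.diagonal_mul, Matrix.one_apply_eq] at h1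
    simp [hd, h] at h1
  have hl0 : l₀ ≠ 0 := by
    intro h
    have h1 := congrArg (fun M : Matrix (Fin N) (Fin N) ℂ => M i0 i0) (hinv l)
    simp only [hdl, Matrix.diagonal_mul, Matrix.one_apply_eq] at h1
    rw [hdl0, h] at h1
    simp at h1
  -- the map R0 → ℂ
  let h : Multiplicative (ℤ × ℤ) →* ℂ :=
  { toFun := fun p => l₀ ^ (Multiplicative.toAdd p).1 * μ₀ ^ (Multiplicative.toAdd p).2
    map_one' := by simp
    map_mul' := by
      intro x y
      simp only [toAdd_mul, Prod.fst_add, Prod.snd_add, zpow_add₀ hl0, zpow_add₀ hmu0]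
      ring }
  let φ : R0 →+* ℂ := ((AddMonoidAlgebra.lift ℤ ℂ (ℤ × ℤ)) h).toRingHom
  have hφlam : φ lam = l₀ := by
    show ((AddMonoidAlgebra.lift ℤ ℂ (ℤ × ℤ)) h) (AddMonoidAlgebra.single (1, 0) 1) = l₀
    rw [AddMonoidAlgebra.lift_single]
    simp [h]
  have hφmu : φ mu = μ₀ := by
    show ((AddMonoidAlgebra.lift ℤ ℂ (ℤ × ℤ)) h) (AddMonoidAlgebra.single (0, 1) 1) = μ₀
    rw [AddMonoidAlgebra.lift_single]
    simp [h]
  letI : Algebra R0 ℂ := φ.toAlgebra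
  have halg : ∀ c : R0, algebraMap R0 ℂ c = φ c := fun c => rfl
  let F : FreeAlgebra R0 π →+* ℂ :=
    ((FreeAlgebra.lift R0
      (fun γ : π => (1 - μ₀) * (ρ γ : Matrix (Fin N) (Fin N) ℂ) i0 i0)) :
      FreeAlgebra R0 π →ₐ[R0] ℂ).toRingHom
  have hFι : ∀ γ : π, F (FreeAlgebra.ι R0 γ) =
      (1 - μ₀) * (ρ γ : Matrix (Fin N) (Fin N) ℂ) i0 i0 := fun γ => by
    simp [F, FreeAlgebra.lift_ι_apply]
  have hFalg : ∀ c : R0, F (algebraMap R0 _ c) = φ c := fun c => by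
    simp only [F, AlgHom.toRingHom_eq_coe, RingHom.coe_coe]
    rw [AlgHom.commutes]
    rfl
  -- F respects the relations
  have hrel : ∀ ⦃x y⦄, cordRel π m l x y → F x = F y := by
    intro x y hxy
    induction hxy with
    | ident =>
        rw [hFι, map_sub, map_one, hFalg, hφmu, map_one]
        simp [Matrix.one_apply_eq]
    | mul_l γ =>
        rw [map_mul F, hFalg, hφlam, hFι, hFι, coe_mul, hdl]
        rw [show ((ρ γ : Matrix (Fin N) (Fin N) ℂ) * Matrix.diagonal dl) i0 i0
            = (ρ γ : Matrix (Fin N) (Fin N) ℂ) i0 i0 * dl i0 from Matrix.mul_diagonal _ _ _ _]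
        rw [hdl0]; ring
    | l_mul γ =>
        rw [map_mul F, hFalg, hφlam, hFι, hFι, coe_mul, hdl]
        rw [show (Matrix.diagonal dl * (ρ γ : Matrix (Fin N) (Fin N) ℂ)) i0 i0
            = dl i0 * (ρ γ : Matrix (Fin N) (Fin N) ℂ) i0 i0 from Matrix.diagonal_mul _ _ _ _]
        rw [hdl0]; ring
    | mul_m γ =>
        rw [map_mul F, hFalg, hφmu, hFι, hFι, coe_mul, hρm]
        rw [show ((ρ γ : Matrix (Fin N) (Fin N) ℂ) * Matrix.diagonal d) i0 i0
            = (ρ γ : Matrix (Fin N) (Fin N) ℂ) i0 i0 * d i0 from Matrix.mul_diagonal _ _ _ _]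
        simp only [hd, if_pos rfl]; ring
    | m_mul γ =>
        rw [map_mul F, hFalg, hφmu, hFι, hFι, coe_mul, hρm]
        rw [show (Matrix.diagonal d * (ρ γ : Matrix (Fin N) (Fin N) ℂ)) i0 i0
            = d i0 * (ρ γ : Matrix (Fin N) (Fin N) ℂ) i0 i0 from Matrix.diagonal_mul _ _ _ _]
        simp only [hd, if_pos rfl]; ring
    | skein γ₁ γ₂ =>
        rw [map_add F, map_mul F]; simp only [hFι]
        set A := (ρ γ₁ : Matrix (Fin N) (Fin N) ℂ)
        set B := (ρ γ₂ : Matrix (Fin N) (Fin N) ℂ)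
        have hAB : (ρ (γ₁ * γ₂) : Matrix (Fin N) (Fin N) ℂ) = A * B := coe_mul _ _
        have hAmB : (ρ (γ₁ * m * γ₂) : Matrix (Fin N) (Fin N) ℂ)
            = (A * Matrix.diagonal d) * B := by
          rw [coe_mul, coe_mul, hρm]
        rw [hAB, hAmB]
        have key : (A * B) i0 i0
            = ((A * Matrix.diagonal d) * B) i0 i0 + (1 - μ₀) * (A i0 i0 * B i0 i0) := by
          rw [Matrix.mul_apply, Matrix.mul_apply]
          have hterm : ∀ k, (A * Matrix.diagonal d) i0 k * B k i0
              = A i0 k * (d k * B k i0) := by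
            intro k
            rw [Matrix.mul_diagonal]; ring
          rw [Finset.sum_congr rfl (fun k _ => hterm k)]
          have : ∑ k, A i0 k * B k i0 - ∑ k, A i0 k * (d k * B k i0)
              = (1 - μ₀) * (A i0 i0 * B i0 i0) := by
            rw [← Finset.sum_sub_distrib]
            rw [Finset.sum_eq_single i0]
            · simp only [hd, if_pos rfl]; ring
            · intro k _ hk
              simp only [hd, if_neg hk]; ring
            · intro hk; exact absurd (Finset.mem_univ i0) hk
          linear_combination this
        rw [key]; ring
  refine ⟨RingQuot.lift ⟨F, hrel⟩, fun γ => ?_, ?_, ?_⟩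
  · rw [RingQuot.lift_mkRingHom_apply, hFι]
  · rw [RingQuot.lift_mkRingHom_apply, hFalg, hφlam]
  · rw [RingQuot.lift_mkRingHom_apply, hFalg, hφmu]
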